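/- Let (A, C, ψ) be an entwining structure and e ∈ C a group-like element, and suppose the map can_ψ : A ⊗_B A → A ⊗ C, a ⊗ a' ↦ a·ψ(e ⊗ a'), is bijective, where B = {b ∈ A | ψ(e ⊗ b) = b ⊗ e}. Then Δ_A : A → A ⊗ C, a ↦ ψ(e ⊗ a), is a right C-comodule structure on A with Δ_A(1) = 1 ⊗ e, the coinvariants {b ∈ A | Δ_A(ba) = bΔ_A(a) ∀a} equal B, and B ⊆ A is a C-Galois extension whose canonical entwining map is ψ. Moreover Δ_A is the unique coaction with these properties. -/

import Mathlib

open TensorProduct LinearMap Coalgebra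

set_option synthInstance.maxHeartbeats 400000
set_option maxHeartbeats 1000000

variable {k A C : Type*} [Field k] [Ring A] [Algebra k A]
  [AddCommGroup C] [Module k C] [Coalgebra k C]

/-- The four axioms of an entwining structure `(A, C, ψ)`. -/
def IsEntwining (ψ : C ⊗[k] A →ₗ[k] A ⊗[k] C) : Prop :=
  (ψ ∘ₗ (LinearMap.mul' k A).lTensor C ∘ₗ (TensorProduct.assoc k C A A).toLinearMap
      = (LinearMap.mul' k A).rTensor C ∘ₗ (TensorProduct.assoc k A A C).symm.toLinearMap
        ∘ₗ ψ.lTensor A ∘ₗ (TensorProduct.assoc k A C A).toLinearMap ∘ₗ ψ.rTensor A)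
  ∧ (∀ c : C, ψ (c ⊗ₜ[k] (1 : A)) = (1 : A) ⊗ₜ[k] c)
  ∧ ((comul (R := k) (A := C)).lTensor A ∘ₗ ψ
      = (TensorProduct.assoc k A C C).toLinearMap ∘ₗ ψ.rTensor C
        ∘ₗ (TensorProduct.assoc k C A C).symm.toLinearMap ∘ₗ ψ.lTensor C
        ∘ₗ (TensorProduct.assoc k C C A).toLinearMap ∘ₗ (comul (R := k) (A := C)).rTensor A)
  ∧ ((TensorProduct.rid k A).toLinearMap ∘ₗ (counit (R := k) (A := C)).lTensor A ∘ₗ ψ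
      = (TensorProduct.lid k A).toLinearMap ∘ₗ (counit (R := k) (A := C)).rTensor A)

/-- `ρ : A → A ⊗ C` is a (counital, coassociative) right `C`-comodule structure. -/
def IsComodule (ρ : A →ₗ[k] A ⊗[k] C) : Prop :=
  ((comul (R := k) (A := C)).lTensor A ∘ₗ ρ
      = (TensorProduct.assoc k A C C).toLinearMap ∘ₗ ρ.rTensor C ∘ₗ ρ)
  ∧ ((TensorProduct.rid k A).toLinearMap
      ∘ₗ (counit (R := k) (A := C)).lTensor A ∘ₗ ρ = LinearMap.id)

/-- The coinvariants `B = A^{co C}` of a coaction `ρ`. -/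
def coinvSet (ρ : A →ₗ[k] A ⊗[k] C) : Set A :=
  {b : A | ∀ a : A, ρ (b * a) = (LinearMap.mulLeft k b).rTensor C (ρ a)}

/-- The canonical map `A ⊗ A → A ⊗ C`, `a ⊗ a' ↦ a · ρ a'`, whose factorisation
through `A ⊗_B A` is the canonical Galois map `can`. -/
noncomputable def canF (ρ : A →ₗ[k] A ⊗[k] C) : A ⊗[k] A →ₗ[k] A ⊗[k] C :=
  (LinearMap.mul' k A).rTensor C ∘ₗ (TensorProduct.assoc k A A C).symm.toLinearMap
    ∘ₗ ρ.lTensor A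

/-- The kernel of `A ⊗ A ↠ A ⊗_B A`: the subspace spanned by
`a b ⊗ a' - a ⊗ b a'` for `b ∈ B = A^{co C}`. -/
noncomputable def relJ (ρ : A →ₗ[k] A ⊗[k] C) : Submodule k (A ⊗[k] A) :=
  Submodule.span k {x : A ⊗[k] A | ∃ (a a' b : A), b ∈ coinvSet ρ
    ∧ x = (a * b) ⊗ₜ[k] a' - a ⊗ₜ[k] (b * a')}

/-- `B ⊆ A` is a `C`-Galois extension: the canonical map
`can : A ⊗_B A → A ⊗ C` is bijective; equivalently, `canF ρ` is surjective
with kernel exactly `relJ ρ`. -/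
def IsCGalois (ρ : A →ₗ[k] A ⊗[k] C) : Prop :=
  Function.Surjective (canF ρ) ∧ LinearMap.ker (canF ρ) = relJ ρ

/-- A (linear) lift of the translation map `τ = can⁻¹(1 ⊗ -) : C → A ⊗_B A`
to `A ⊗ A`. -/
def IsTranslationLift (ρ : A →ₗ[k] A ⊗[k] C) (τ : C →ₗ[k] A ⊗[k] A) : Prop :=
  ∀ c : C, canF ρ (τ c) = (1 : A) ⊗ₜ[k] c

/-- The canonical entwining map `ψ = can ∘ (A ⊗_B m) ∘ (τ ⊗ A)` associated to a
`C`-Galois extension, expressed through a lift `τ` of the translation map: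
`ψ (c ⊗ a) = c⁽¹⁾ ((c⁽²⁾ a)₍₀₎) ⊗ (c⁽²⁾ a)₍₁₎`. -/
noncomputable def canPsi (ρ : A →ₗ[k] A ⊗[k] C) (τ : C →ₗ[k] A ⊗[k] A) :
    C ⊗[k] A →ₗ[k] A ⊗[k] C :=
  canF ρ ∘ₗ (LinearMap.mul' k A).lTensor A
    ∘ₗ (TensorProduct.assoc k A A A).toLinearMap ∘ₗ τ.rTensor A

/-- The right `A`-action `(m ⊗ C) ∘ (A ⊗ ψ)` on `A ⊗ C` induced by an entwining map. -/
noncomputable def actPsi (ψ : C ⊗[k] A →ₗ[k] A ⊗[k] C) :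
    (A ⊗[k] C) ⊗[k] A →ₗ[k] A ⊗[k] C :=
  (LinearMap.mul' k A).rTensor C ∘ₗ (TensorProduct.assoc k A A C).symm.toLinearMap
    ∘ₗ ψ.lTensor A ∘ₗ (TensorProduct.assoc k A C A).toLinearMap

lemma mul_rT_assoc_symm (x : A) (w : A ⊗[k] C) :
    (LinearMap.mul' k A).rTensor C ((TensorProduct.assoc k A A C).symm (x ⊗ₜ[k] w))
      = (LinearMap.mulLeft k x).rTensor C w := by
  induction w using TensorProduct.induction_on with
  | zero => simp
  | tmul a c => simp
  | add u v hu hv => simp only [tmul_add, map_add, hu, hv]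

lemma canF_tmul (ρ : A →ₗ[k] A ⊗[k] C) (x y : A) :
    canF ρ (x ⊗ₜ[k] y) = (LinearMap.mulLeft k x).rTensor C (ρ y) := by
  simp only [canF, LinearMap.coe_comp, Function.comp_apply, LinearEquiv.coe_coe,
    LinearMap.lTensor_tmul]
  exact mul_rT_assoc_symm x (ρ y)

lemma actPsi_tmul (ψ : C ⊗[k] A →ₗ[k] A ⊗[k] C) (x : A) (c : C) (a : A) :
    actPsi ψ ((x ⊗ₜ[k] c) ⊗ₜ[k] a) = (LinearMap.mulLeft k x).rTensor C (ψ (c ⊗ₜ[k] a)) := by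
  simp only [actPsi, LinearMap.coe_comp, Function.comp_apply, LinearEquiv.coe_coe,
    TensorProduct.assoc_tmul, LinearMap.lTensor_tmul]
  exact mul_rT_assoc_symm x (ψ (c ⊗ₜ[k] a))

lemma rT_mulLeft_mulLeft (x u : A) (v : A ⊗[k] C) :
    (LinearMap.mulLeft k x).rTensor C ((LinearMap.mulLeft k u).rTensor C v)
      = (LinearMap.mulLeft k (x * u)).rTensor C v := by
  induction v using TensorProduct.induction_on with
  | zero => simp
  | tmul a c => simp [mul_assoc]
  | add u' v' hu hv => simp only [map_add, hu, hv]

lemma rT_mulLeft_one (v : A ⊗[k] C) :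
    (LinearMap.mulLeft k (1 : A)).rTensor C v = v := by
  rw [LinearMap.mulLeft_one, LinearMap.rTensor_id, LinearMap.id_apply]

/-- Proposition 4.2, (1) ⇒ (2): if `(A,C,ψ)` is an entwining
structure, `e ∈ C` is group-like, `B = {b | ψ(e ⊗ b) = b ⊗ e}` and the map
`can_ψ : A ⊗_B A → A ⊗ C`, `a ⊗ a' ↦ a ψ(e ⊗ a')`, is bijective, then
`Δ_A := ψ(e ⊗ -)` is a right `C`-comodule structure on `A` with `Δ_A 1 = 1 ⊗ e`,
its coinvariants are exactly `B`, `B ⊆ A` is a `C`-Galois extension whose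
canonical entwining map is `ψ`, and `Δ_A` is the unique such coaction. -/
theorem psi_principal_bundle_gives_galois
    (ψ : C ⊗[k] A →ₗ[k] A ⊗[k] C) (hψ : IsEntwining ψ)
    (e : C) (he₁ : comul (R := k) e = e ⊗ₜ[k] e) (he₂ : counit (R := k) e = 1)
    (hsurj : Function.Surjective (canF (ψ ∘ₗ TensorProduct.mk k C A e)))
    (hker : LinearMap.ker (canF (ψ ∘ₗ TensorProduct.mk k C A e))
      = Submodule.span k {x : A ⊗[k] A | ∃ (a a' b : A),
          ψ (e ⊗ₜ[k] b) = b ⊗ₜ[k] e ∧ x = (a * b) ⊗ₜ[k] a' - a ⊗ₜ[k] (b * a')}) :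
    letI ρ : A →ₗ[k] A ⊗[k] C := ψ ∘ₗ TensorProduct.mk k C A e
    IsComodule ρ
    ∧ ρ 1 = (1 : A) ⊗ₜ[k] e
    ∧ coinvSet ρ = {b : A | ψ (e ⊗ₜ[k] b) = b ⊗ₜ[k] e}
    ∧ IsCGalois ρ
    ∧ (∀ τ : C →ₗ[k] A ⊗[k] A, IsTranslationLift ρ τ → canPsi ρ τ = ψ)
    ∧ (∀ ρ' : A →ₗ[k] A ⊗[k] C, IsComodule ρ' → ρ' 1 = (1 : A) ⊗ₜ[k] e →
        ρ' ∘ₗ LinearMap.mul' k A = actPsi ψ ∘ₗ ρ'.rTensor A → ρ' = ρ) := by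

  set ρ : A →ₗ[k] A ⊗[k] C := ψ ∘ₗ TensorProduct.mk k C A e with hρdef
  -- element-level right A-linearity of ρ
  have lemA : ∀ x y : A, ρ (x * y) = actPsi ψ (ρ x ⊗ₜ[k] y) := by
    intro x y
    have h := LinearMap.congr_fun hψ.1 ((e ⊗ₜ[k] x) ⊗ₜ[k] y)
    simp only [LinearMap.coe_comp, Function.comp_apply, LinearEquiv.coe_coe,
      TensorProduct.assoc_tmul, LinearMap.lTensor_tmul, LinearMap.mul'_apply,
      LinearMap.rTensor_tmul] at h
    have h2 : ((LinearMap.mul' k A).rTensor C ∘ₗ (TensorProduct.assoc k A A C).symm.toLinearMap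
        ∘ₗ ψ.lTensor A ∘ₗ (TensorProduct.assoc k A C A).toLinearMap) (ψ (e ⊗ₜ[k] x) ⊗ₜ[k] y)
        = actPsi ψ (ψ (e ⊗ₜ[k] x) ⊗ₜ[k] y) := rfl
    simp only [LinearMap.coe_comp, Function.comp_apply, LinearEquiv.coe_coe] at h2
    show ψ (e ⊗ₜ[k] (x * y)) = actPsi ψ (ψ (e ⊗ₜ[k] x) ⊗ₜ[k] y)
    rw [h, h2]
  have hρ1 : ρ 1 = (1 : A) ⊗ₜ[k] e := hψ.2.1 e
  -- coinvariants
  have hcoinv : coinvSet ρ = {b : A | ψ (e ⊗ₜ[k] b) = b ⊗ₜ[k] e} := by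
    ext b
    constructor
    · intro hb
      have := hb 1
      simp only [mul_one, hρ1, LinearMap.rTensor_tmul, LinearMap.mulLeft_apply, mul_one] at this
      exact this
    · intro hb a
      have : ρ b = b ⊗ₜ[k] e := hb
      rw [lemA b a, this, actPsi_tmul]
      rfl
  refine ⟨⟨?_, ?_⟩, hρ1, hcoinv, ⟨hsurj, ?_⟩, ?_, ?_⟩
  · -- coassociativity
    apply LinearMap.ext
    intro a
    have h := LinearMap.congr_fun hψ.2.2.1 (e ⊗ₜ[k] a)
    have H : ψ.rTensor C ∘ₗ (TensorProduct.assoc k C A C).symm.toLinearMap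
        ∘ₗ TensorProduct.mk k C (A ⊗[k] C) e = ρ.rTensor C := by
      apply TensorProduct.ext'
      intro x c
      simp [hρdef]
    simp only [LinearMap.coe_comp, Function.comp_apply, LinearEquiv.coe_coe,
      LinearMap.rTensor_tmul, he₁, TensorProduct.assoc_tmul, LinearMap.lTensor_tmul] at h
    have H' := LinearMap.congr_fun H (ψ (e ⊗ₜ[k] a))
    simp only [LinearMap.coe_comp, Function.comp_apply, LinearEquiv.coe_coe,
      TensorProduct.mk_apply] at H'
    simp only [LinearMap.coe_comp, Function.comp_apply, LinearEquiv.coe_coe]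
    show (comul (R := k) (A := C)).lTensor A (ψ (e ⊗ₜ[k] a))
      = (TensorProduct.assoc k A C C) (ρ.rTensor C (ψ (e ⊗ₜ[k] a)))
    rw [h, H']
  · -- counit
    apply LinearMap.ext
    intro a
    have h := LinearMap.congr_fun hψ.2.2.2 (e ⊗ₜ[k] a)
    simp only [LinearMap.coe_comp, Function.comp_apply, LinearEquiv.coe_coe,
      LinearMap.rTensor_tmul, he₂, TensorProduct.lid_tmul, one_smul] at h
    simpa [hρdef] using h
  · -- kernel condition
    rw [hker, relJ, hcoinv]
    rfl
  · -- canPsi = ψ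
    intro τ hτ
    have key : ∀ (w : A ⊗[k] A) (a : A),
        canF ρ ((LinearMap.mul' k A).lTensor A ((TensorProduct.assoc k A A A) (w ⊗ₜ[k] a)))
          = actPsi ψ (canF ρ w ⊗ₜ[k] a) := by
      intro w a
      induction w using TensorProduct.induction_on with
      | zero => simp only [TensorProduct.zero_tmul, map_zero]
      | tmul x y =>
        rw [TensorProduct.assoc_tmul, LinearMap.lTensor_tmul, LinearMap.mul'_apply,
          canF_tmul, canF_tmul]
        show (LinearMap.mulLeft k x).rTensor C (ρ (y * a)) = _
        rw [lemA y a]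
        have gen : ∀ v : A ⊗[k] C, (LinearMap.mulLeft k x).rTensor C (actPsi ψ (v ⊗ₜ[k] a))
            = actPsi ψ ((LinearMap.mulLeft k x).rTensor C v ⊗ₜ[k] a) := by
          intro v
          induction v using TensorProduct.induction_on with
          | zero => simp only [TensorProduct.zero_tmul, map_zero]
          | tmul u c =>
            rw [actPsi_tmul, rT_mulLeft_mulLeft, LinearMap.rTensor_tmul,
              LinearMap.mulLeft_apply, actPsi_tmul]
          | add u v hu hv => simp only [map_add, TensorProduct.add_tmul, hu, hv]
        exact gen (ρ y)
      | add u v hu hv =>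
        simp only [TensorProduct.add_tmul, map_add, hu, hv]
    apply TensorProduct.ext'
    intro c a
    have : canPsi ρ τ (c ⊗ₜ[k] a)
        = canF ρ ((LinearMap.mul' k A).lTensor A ((TensorProduct.assoc k A A A) (τ c ⊗ₜ[k] a))) := by
      simp [canPsi]
    rw [this, key, hτ c, actPsi_tmul, rT_mulLeft_one]
  · -- uniqueness
    intro ρ' _ hone hmul
    apply LinearMap.ext
    intro a
    have h := LinearMap.congr_fun hmul ((1 : A) ⊗ₜ[k] a)
    simp only [LinearMap.coe_comp, Function.comp_apply, LinearMap.mul'_apply, one_mul,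
      LinearMap.rTensor_tmul, hone] at h
    rw [h, actPsi_tmul, rT_mulLeft_one]
    rfl
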